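/- Plancherel formula: Assume depth 2. For the Fourier transform F(a) = γ(w₋₁* a w₁) and the weight μ₋₁ on A₋₂,₋₁ given by μ₋₁(x) = Σᵢ λᵢ γ⁻¹(x) λᵢ*, one has μ₋₁(F(a)* F(a)) = μ₀(a* a) for all a ∈ A₋₁,₀; more generally μ₋₁(F(a)* F(b)) = μ₀(a* b). -/
import Mathlib


/-- Plancherel formula: Assume depth 2.  For the Fourier
transform `F(a) = γ(w₋₁* a w₁)` and the weight `μ₋₁` on `A₋₂,₋₁` given by
`μ₋₁(x) = Σᵢ λᵢ γ⁻¹(x) λᵢ*`, one has `μ₋₁(F(a)* F(b)) = μ₀(a* b)` for all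
`a, b ∈ A₋₁,₀` (in particular `μ₋₁(F(a)* F(a)) = μ₀(a* a)`).  Since `γ` is
injective, `γ⁻¹(F(a)* F(b))` is encoded as the unique `y` with
`γ(y) = F(a)* F(b)`, and `μ₀(a* b)·1 = w₁* (a* b) w₁`.
(`wm1 = w₋₁`, `w1 = w₁`, `lam i = λᵢ`.) -/
theorem plancherel_formula
    {B : Type*} [Ring B] [StarRing B] [Algebra ℂ B] [StarModule ℂ B]
    (M N : StarSubalgebra ℂ B) (hNM : N ≤ M)
    (γ : B →⋆ₐ[ℂ] B) (hγinj : Function.Injective γ) (hγM : ∀ m ∈ M, γ m ∈ N)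
    (wm1 w1 : B) (hwN : wm1 ∈ N) (hiso : star wm1 * wm1 = 1)
    (hintN : ∀ n ∈ N, wm1 * n = γ n * wm1)
    (hγw1 : γ w1 = wm1) (hiso1 : star w1 * w1 = 1)
    (hintM : ∀ m ∈ M, w1 * m = γ m * w1)
    {ι : Type*} [Fintype ι] (lam : ι → B)
    (hlamA : ∀ i, lam i ∈ M ∧ ∀ m ∈ M, lam i * γ m = γ m * lam i)
    (hPP1 : ∑ i, lam i * (w1 * star w1) * star (lam i) = 1)
    (hPPm1 : ∑ i, lam i * (wm1 * star wm1) * star (lam i) = 1) :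
    ∀ a ∈ M, (∀ m ∈ M, a * γ m = γ m * a) →
      ∀ b ∈ M, (∀ m ∈ M, b * γ m = γ m * b) →
        ∀ y : B, γ y = star (γ (star wm1 * a * w1)) * γ (star wm1 * b * w1) →
          ∀ c : ℂ, star w1 * (star a * b) * w1 = c • (1 : B) →
            ∑ i, lam i * y * star (lam i) = c • (1 : B) := by
  intro a haM haC b hbM hbC y hy c hc
  -- identify y
  have hy' : y = star w1 * star a * wm1 * (star wm1 * (b * w1)) := by
    apply hγinj
    rw [hy]
    rw [← map_star]
    rw [← map_mul]
    congr 1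
    simp [star_mul, mul_assoc]
  -- star of the intertwining relation for w1
  have hstar : ∀ m ∈ M, m * star w1 = star w1 * γ m := by
    intro m hm
    have h := hintM (star m) (star_mem hm)
    have h' := congrArg star h
    simpa [star_mul, map_star] using h'
  -- star a commutes with γ(M)
  have haC' : ∀ m ∈ M, γ m * star a = star a * γ m := by
    intro m hm
    have h := haC (star m) (star_mem hm)
    have h' := congrArg star h
    simpa [star_mul, map_star] using h'
  -- per-term rewrite
  have key : ∀ i, lam i * y * star (lam i)
      = star w1 * star a * γ (lam i * (w1 * star w1) * star (lam i)) * (b * w1) := by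
    intro i
    obtain ⟨hlM, hlC⟩ := hlamA i
    have h1 : lam i * star w1 = star w1 * γ (lam i) := hstar _ hlM
    have h2 : γ (lam i) * star a = star a * γ (lam i) := haC' _ hlM
    have h3 : w1 * star (lam i) = γ (star (lam i)) * w1 := hintM _ (star_mem hlM)
    have h4 : b * γ (star (lam i)) = γ (star (lam i)) * b := hbC _ (star_mem hlM)
    calc lam i * y * star (lam i)
        = lam i * star w1 * (star a * (wm1 * (star wm1 * (b * (w1 * star (lam i)))))) := by
          rw [hy']; noncomm_ring
      _ = star w1 * γ (lam i) * (star a * (wm1 * (star wm1 * (b * (γ (star (lam i)) * w1))))) := by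
          rw [h1, h3]
      _ = star w1 * γ (lam i) * (star a * (wm1 * (star wm1 * (γ (star (lam i)) * (b * w1))))) := by
          rw [← mul_assoc b, h4]; noncomm_ring
      _ = star w1 * (star a * γ (lam i)) * (wm1 * (star wm1 * (γ (star (lam i)) * (b * w1)))) := by
          rw [← h2]; noncomm_ring
      _ = star w1 * star a * (γ (lam i) * (γ w1 * (star (γ w1) * (γ (star (lam i)) * (b * w1))))) := by
          rw [hγw1]; noncomm_ring
      _ = star w1 * star a * γ (lam i * (w1 * star w1) * star (lam i)) * (b * w1) := by
          simp only [map_mul, map_star, mul_assoc]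
  calc ∑ i, lam i * y * star (lam i)
      = ∑ i, star w1 * star a * γ (lam i * (w1 * star w1) * star (lam i)) * (b * w1) := by
        exact Finset.sum_congr rfl fun i _ => key i
    _ = star w1 * star a * γ (∑ i, lam i * (w1 * star w1) * star (lam i)) * (b * w1) := by
        rw [← Finset.sum_mul, ← Finset.mul_sum, map_sum]
    _ = c • (1 : B) := by rw [hPP1, map_one, mul_one, ← hc]; noncomm_ring
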